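/- Let A be a real number and (a_m)_{m≥1} a sequence with a_m → A. Then Σ_{m=1}^∞ (5/3)^m (a_m - A)^2 < ∞ if and only if Σ_{m=1}^∞ (5/3)^m (a_{m+1} - a_m)^2 < ∞. -/

import Mathlib

open Filter Finset

/-- Cauchy–Schwarz for tsums of nonnegative sequences. -/
private lemma my_tsum_cs (f g : ℕ → ℝ) (hf0 : ∀ n, 0 ≤ f n) (hg0 : ∀ n, 0 ≤ g n)
    (hf : Summable (fun n => f n ^ 2)) (hg : Summable fun n => g n ^ 2) :
    (∑' n, f n * g n) ^ 2 ≤ (∑' n, f n ^ 2) * (∑' n, g n ^ 2) := by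
  have hP1 : (0:ℝ) ≤ ∑' n, f n ^ 2 := tsum_nonneg fun n => sq_nonneg _
  have hP2 : (0:ℝ) ≤ ∑' n, g n ^ 2 := tsum_nonneg fun n => sq_nonneg _
  have hfg : Summable fun n => f n * g n := by
    apply Summable.of_nonneg_of_le (fun n => mul_nonneg (hf0 n) (hg0 n))
      (fun n => ?_) (hf.add hg)
    nlinarith [sq_nonneg (f n - g n)]
  have h1 : ∑' n, f n * g n ≤ Real.sqrt ((∑' n, f n ^ 2) * (∑' n, g n ^ 2)) := by
    apply Summable.tsum_le_of_sum_le hfg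
    intro s
    have h2 : (∑ i ∈ s, f i * g i) ^ 2 ≤ (∑' n, f n ^ 2) * (∑' n, g n ^ 2) := by
      refine le_trans (sum_mul_sq_le_sq_mul_sq s f g) ?_
      exact mul_le_mul (Summable.sum_le_tsum s (fun i _ => sq_nonneg _) hf)
        (Summable.sum_le_tsum s (fun i _ => sq_nonneg _) hg)
        (Finset.sum_nonneg fun i _ => sq_nonneg _) hP1
    calc ∑ i ∈ s, f i * g i ≤ |∑ i ∈ s, f i * g i| := le_abs_self _
      _ = Real.sqrt ((∑ i ∈ s, f i * g i) ^ 2) := (Real.sqrt_sq_eq_abs _).symm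
      _ ≤ _ := Real.sqrt_le_sqrt h2
  have hnn : (0:ℝ) ≤ ∑' n, f n * g n :=
    tsum_nonneg fun n => mul_nonneg (hf0 n) (hg0 n)
  calc (∑' n, f n * g n) ^ 2
      ≤ Real.sqrt ((∑' n, f n ^ 2) * (∑' n, g n ^ 2)) ^ 2 :=
        pow_le_pow_left₀ hnn h1 2
    _ = _ := Real.sq_sqrt (mul_nonneg hP1 hP2)

private lemma my_amgm_abs (x s : ℝ) : 2 * s * |x| ≤ s ^ 2 + x ^ 2 := by
  nlinarith [sq_nonneg (s - |x|), sq_abs x]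

set_option maxHeartbeats 1000000 in
/-- for a_m → A, Σ (5/3)^m (a_m - A)^2 < ∞ iff
Σ (5/3)^m (a_{m+1} - a_m)^2 < ∞. -/
theorem stmt15 (a : ℕ → ℝ) (A : ℝ) (ha : Filter.Tendsto a Filter.atTop (nhds A)) :
    Summable (fun m : ℕ => ((5:ℝ)/3)^(m+1) * (a (m+1) - A)^2) ↔
    Summable (fun m : ℕ => ((5:ℝ)/3)^(m+1) * (a (m+2) - a (m+1))^2) := by
  set d : ℕ → ℝ := fun j => a (j + 1) - a j with hd_def
  set S : ℕ → ℝ := fun N => ((5:ℝ)/3) ^ N * (a N - A) ^ 2 with hS_def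
  set F : ℕ → ℝ := fun j => ((5:ℝ)/3) ^ j * d j ^ 2 with hF_def
  constructor
  · -- easy direction
    intro h
    have h1 : Summable fun n : ℕ => S (n + 1) := h
    have h2 : Summable fun n : ℕ => S (n + 2) := (summable_nat_add_iff 1).2 h1
    apply Summable.of_nonneg_of_le
      (fun m => mul_nonneg (by positivity) (sq_nonneg _))
      (fun m => ?_) ((h1.mul_left 2).add (h2.mul_left 2))
    have hp : (0:ℝ) < ((5:ℝ)/3) ^ (m + 1) := by positivity
    have hS1 : S (m + 1) = ((5:ℝ)/3) ^ (m+1) * (a (m+1) - A)^2 := rfl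
    have hS2 : S (m + 2) = ((5:ℝ)/3) ^ (m+2) * (a (m+2) - A)^2 := rfl
    have hpow : ((5:ℝ)/3) ^ (m + 2) = ((5:ℝ)/3) * ((5:ℝ)/3)^(m+1) := by ring
    rw [hS1, hS2, hpow]
    nlinarith [sq_nonneg (a (m+2) - A), sq_nonneg (a (m+1) - A),
      sq_nonneg ((a (m+2) - A) + (a (m+1) - A)), hp.le]
  · -- hard direction
    intro h
    have hF : Summable F := by
      have h1 : Summable fun m : ℕ => F (m + 1) := h
      exact (summable_nat_add_iff 1).1 h1
    have hF0 : ∀ j, 0 ≤ F j := fun j => mul_nonneg (by positivity) (sq_nonneg _)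
    set w : ℕ → ℝ := fun j => ((4:ℝ)/3) ^ j * d j ^ 2 with hw_def
    have hw0 : ∀ j, 0 ≤ w j := fun j => mul_nonneg (by positivity) (sq_nonneg _)
    have hwF : ∀ j, w j ≤ F j := fun j =>
      mul_le_mul_of_nonneg_right
        (pow_le_pow_left₀ (by norm_num) (by norm_num) j) (sq_nonneg _)
    have hw : Summable w := Summable.of_nonneg_of_le hw0 hwF hF
    -- absolute summability of d
    have hdabs : Summable fun j => |d j| := by
      apply Summable.of_nonneg_of_le (fun j => abs_nonneg _) (fun j => ?_)
        ((summable_geometric_of_lt_one (by norm_num : (0:ℝ) ≤ 3/5)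
          (by norm_num)).add hF)
      have hst : ((3:ℝ)/5) ^ j * ((5:ℝ)/3) ^ j = 1 := by
        rw [← mul_pow]; norm_num
      have htpos : (0:ℝ) < ((5:ℝ)/3) ^ j := by positivity
      simp only [hF_def]
      have h2 : 2 * ((3:ℝ)/5) ^ j * |d j| ≤ (((3:ℝ)/5) ^ j) ^ 2 + d j ^ 2 :=
        my_amgm_abs (d j) (((3:ℝ)/5) ^ j)
      have e1 : ((5:ℝ)/3) ^ j * (2 * ((3:ℝ)/5) ^ j * |d j|) = 2 * |d j| := by
        linear_combination (2 * |d j|) * hst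
      have e2 : ((5:ℝ)/3) ^ j * ((((3:ℝ)/5) ^ j) ^ 2 + d j ^ 2)
          = ((3:ℝ)/5) ^ j + ((5:ℝ)/3) ^ j * d j ^ 2 := by
        linear_combination (((3:ℝ)/5) ^ j) * hst
      have h3 : 2 * |d j| ≤ ((3:ℝ)/5) ^ j + ((5:ℝ)/3) ^ j * d j ^ 2 := by
        rw [← e1, ← e2]
        exact mul_le_mul_of_nonneg_left h2 htpos.le
      linarith [abs_nonneg (d j)]
    have hd : Summable d := hdabs.of_abs
    have hdN : ∀ N : ℕ, Summable fun k => d (N + k) := fun N =>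
      ((summable_nat_add_iff N).2 hd).congr fun k => by rw [add_comm]
    have hdabsN : ∀ N : ℕ, Summable fun k => |d (N + k)| := fun N =>
      ((summable_nat_add_iff N).2 hdabs).congr fun k => by rw [add_comm]
    have hwN : ∀ N : ℕ, Summable fun k => w (N + k) := fun N =>
      ((summable_nat_add_iff N).2 hw).congr fun k => by rw [add_comm]
    -- telescoping
    have htel : ∀ N : ℕ, HasSum (fun k => d (N + k)) (A - a N) := by
      intro N
      rw [(hdN N).hasSum_iff_tendsto_nat]
      have heq : ∀ K : ℕ, ∑ k ∈ range K, d (N + k) = a (N + K) - a N := by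
        intro K
        exact Finset.sum_range_sub (fun k => a (N + k)) K
      have hlim : Tendsto (fun K : ℕ => a (N + K)) atTop (nhds A) := by
        have h2 := ha.comp (tendsto_add_atTop_nat N)
        simpa only [Function.comp_def, add_comm] using h2
      simp only [heq]
      simpa using hlim.sub_const (a N)
    -- summability of the weighted tails
    have hQs : ∀ N : ℕ, Summable fun k => ((4:ℝ)/3) ^ k * d (N + k) ^ 2 := by
      intro N
      refine ((hwN N).mul_left (((3:ℝ)/4) ^ N)).congr fun k => ?_
      have h34 : ((3:ℝ)/4) ^ N * ((4:ℝ)/3) ^ N = 1 := by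
        rw [← mul_pow]; norm_num
      simp only [hw_def]
      rw [pow_add]
      linear_combination (((4:ℝ)/3) ^ k * d (N + k) ^ 2) * h34
    -- the per-N Cauchy–Schwarz estimate
    have key : ∀ N : ℕ, (a N - A) ^ 2 ≤ 4 * ∑' k, ((4:ℝ)/3) ^ k * d (N + k) ^ 2 := by
      intro N
      have htsum : (a N - A) ^ 2 = (∑' k, d (N + k)) ^ 2 := by
        rw [(htel N).tsum_eq]; ring
      have habs : |∑' k, d (N + k)| ≤ ∑' k, |d (N + k)| := by
        simpa [Real.norm_eq_abs] using norm_tsum_le_tsum_norm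
          (f := fun k => d (N + k))
          (by simpa [Real.norm_eq_abs] using hdabsN N)
      set f : ℕ → ℝ := fun k => Real.sqrt (3/4) ^ k with hf_def
      set g : ℕ → ℝ := fun k => Real.sqrt (4/3) ^ k * |d (N + k)| with hg_def
      have hfg : ∀ k, f k * g k = |d (N + k)| := by
        intro k
        have h1 : Real.sqrt (3/4) * Real.sqrt (4/3) = 1 := by
          rw [← Real.sqrt_mul (by norm_num)]; norm_num
        simp only [hf_def, hg_def]
        rw [← mul_assoc, ← mul_pow, h1, one_pow, one_mul]
      have hf2 : ∀ k, f k ^ 2 = ((3:ℝ)/4) ^ k := by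
        intro k
        simp only [hf_def]
        rw [← pow_mul, mul_comm k 2, pow_mul, Real.sq_sqrt (by norm_num)]
      have hg2 : ∀ k, g k ^ 2 = ((4:ℝ)/3) ^ k * d (N + k) ^ 2 := by
        intro k
        simp only [hg_def]
        rw [mul_pow, ← pow_mul, mul_comm k 2, pow_mul,
          Real.sq_sqrt (by norm_num), sq_abs]
      have hfs : Summable fun k => f k ^ 2 := by
        simp only [hf2]
        exact summable_geometric_of_lt_one (by norm_num) (by norm_num)
      have hgs : Summable fun k => g k ^ 2 := by
        simp only [hg2]; exact hQs N
      have hcs := my_tsum_cs f g (fun k => pow_nonneg (Real.sqrt_nonneg _) k)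
        (fun k => mul_nonneg (pow_nonneg (Real.sqrt_nonneg _) k) (abs_nonneg _))
        hfs hgs
      have hsf2 : ∑' k, f k ^ 2 = 4 := by
        simp only [hf2]
        rw [tsum_geometric_of_lt_one (by norm_num) (by norm_num)]
        norm_num
      have hsfg : ∑' k, f k * g k = ∑' k, |d (N + k)| := tsum_congr hfg
      have hsg2 : ∑' k, g k ^ 2 = ∑' k, ((4:ℝ)/3) ^ k * d (N + k) ^ 2 :=
        tsum_congr hg2
      rw [hsfg, hsf2, hsg2] at hcs
      calc (a N - A) ^ 2 = (∑' k, d (N + k)) ^ 2 := htsum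
        _ ≤ (∑' k, |d (N + k)|) ^ 2 := by
            rw [← sq_abs (∑' k, d (N + k))]
            exact pow_le_pow_left₀ (abs_nonneg _) habs 2
        _ ≤ 4 * ∑' k, ((4:ℝ)/3) ^ k * d (N + k) ^ 2 := hcs
    -- indicator families
    set G : ℕ → ℕ → ℝ := fun N j => if N ≤ j then ((5:ℝ)/4) ^ N * w j else 0
      with hG_def
    have hG0 : ∀ N j, 0 ≤ G N j := by
      intro N j
      simp only [hG_def]
      split
      · exact mul_nonneg (by positivity) (hw0 j)
      · exact le_refl 0
    have hGs : ∀ N, Summable (G N) := by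
      intro N
      apply Summable.of_nonneg_of_le (hG0 N) (fun j => ?_)
        (hw.mul_left (((5:ℝ)/4) ^ N))
      simp only [hG_def]
      split
      · exact le_refl _
      · positivity
    have h54 : ∀ N : ℕ, ((5:ℝ)/4) ^ N * ((4:ℝ)/3) ^ N = ((5:ℝ)/3) ^ N := by
      intro N; rw [← mul_pow]; norm_num
    have hGeq : ∀ N : ℕ,
        ∑' j, G N j = ((5:ℝ)/3) ^ N * ∑' k, ((4:ℝ)/3) ^ k * d (N + k) ^ 2 := by
      intro N
      have h1 := (Summable.sum_add_tsum_nat_add N (hGs N)).symm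
      have h2 : ∑ j ∈ range N, G N j = 0 := by
        apply Finset.sum_eq_zero
        intro j hj
        simp only [hG_def]
        rw [if_neg]
        exact fun hc => absurd (Finset.mem_range.1 hj) (not_lt.2 hc)
      have h3 : ∀ k : ℕ, G N (k + N) = ((5:ℝ)/3) ^ N * (((4:ℝ)/3) ^ k * d (N + k) ^ 2) := by
        intro k
        simp only [hG_def]
        rw [if_pos (Nat.le_add_left N k), add_comm k N]
        simp only [hw_def]
        rw [pow_add]
        linear_combination (((4:ℝ)/3) ^ k * d (N + k) ^ 2) * h54 N
      calc ∑' j, G N j = ∑ j ∈ range N, G N j + ∑' k, G N (k + N) := h1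
        _ = ∑' k, ((5:ℝ)/3) ^ N * (((4:ℝ)/3) ^ k * d (N + k) ^ 2) := by
            rw [h2, zero_add]; exact tsum_congr h3
        _ = ((5:ℝ)/3) ^ N * ∑' k, ((4:ℝ)/3) ^ k * d (N + k) ^ 2 := tsum_mul_left
    -- bound for the partial geometric sums
    have hinner : ∀ (M j : ℕ), ∑ N ∈ range M, G N j ≤ 5 * F j := by
      intro M j
      have e1 : ∑ N ∈ range M, G N j
          = ∑ N ∈ (range M).filter (· ≤ j), ((5:ℝ)/4) ^ N * w j :=
        (Finset.sum_filter _ _).symm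
      have e2 : ∑ N ∈ (range M).filter (· ≤ j), ((5:ℝ)/4) ^ N * w j
          ≤ ∑ N ∈ range (j + 1), ((5:ℝ)/4) ^ N * w j := by
        apply Finset.sum_le_sum_of_subset_of_nonneg
        · intro N hN
          rw [Finset.mem_range]
          have := (Finset.mem_filter.1 hN).2
          omega
        · intro N _ _
          exact mul_nonneg (by positivity) (hw0 j)
      have e3 : ∑ N ∈ range (j + 1), ((5:ℝ)/4) ^ N * w j
          = ((((5:ℝ)/4) ^ (j+1) - 1) / ((5:ℝ)/4 - 1)) * w j := by
        rw [← Finset.sum_mul, geom_sum_eq (by norm_num) (j+1)]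
      have e4 : ((((5:ℝ)/4) ^ (j+1) - 1) / ((5:ℝ)/4 - 1)) * w j ≤ 5 * F j := by
        have h1 : ((((5:ℝ)/4) ^ (j+1) - 1) / ((5:ℝ)/4 - 1)) ≤ 5 * ((5:ℝ)/4) ^ j := by
          rw [div_le_iff₀ (by norm_num)]
          have : ((5:ℝ)/4) ^ (j + 1) = ((5:ℝ)/4) * ((5:ℝ)/4) ^ j := by ring
          rw [this]
          nlinarith [pow_nonneg (by norm_num : (0:ℝ) ≤ 5/4) j]
        calc ((((5:ℝ)/4) ^ (j+1) - 1) / ((5:ℝ)/4 - 1)) * w j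
            ≤ (5 * ((5:ℝ)/4) ^ j) * w j := mul_le_mul_of_nonneg_right h1 (hw0 j)
          _ = 5 * F j := by
              simp only [hw_def, hF_def]
              linear_combination (5 * d j ^ 2) * h54 j
      calc ∑ N ∈ range M, G N j
          ≤ ∑ N ∈ range (j + 1), ((5:ℝ)/4) ^ N * w j := by rw [e1]; exact e2
        _ = _ := e3
        _ ≤ 5 * F j := e4
    -- partial-sum bound for S
    have hbound : ∀ M : ℕ, ∑ N ∈ range M, S N ≤ 20 * ∑' j, F j := by
      intro M
      have hE : ∀ N, S N ≤ 4 * ∑' j, G N j := by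
        intro N
        rw [hGeq N]
        calc S N = ((5:ℝ)/3) ^ N * (a N - A) ^ 2 := rfl
          _ ≤ ((5:ℝ)/3) ^ N * (4 * ∑' k, ((4:ℝ)/3) ^ k * d (N + k) ^ 2) :=
              mul_le_mul_of_nonneg_left (key N) (by positivity)
          _ = 4 * (((5:ℝ)/3) ^ N * ∑' k, ((4:ℝ)/3) ^ k * d (N + k) ^ 2) := by ring
      calc ∑ N ∈ range M, S N
          ≤ ∑ N ∈ range M, 4 * ∑' j, G N j :=
            Finset.sum_le_sum fun N _ => hE N
        _ = 4 * ∑ N ∈ range M, ∑' j, G N j := by rw [Finset.mul_sum]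
        _ = 4 * ∑' j, ∑ N ∈ range M, G N j := by
            rw [Summable.tsum_finsetSum fun N _ => hGs N]
        _ ≤ 4 * (5 * ∑' j, F j) := by
            have hs1 : Summable fun j => ∑ N ∈ range M, G N j :=
              Summable.of_nonneg_of_le
                (fun j => Finset.sum_nonneg fun N _ => hG0 N j)
                (fun j => hinner M j) (hF.mul_left 5)
            have h5 := Summable.tsum_le_tsum (fun j => hinner M j) hs1 (hF.mul_left 5)
            rw [tsum_mul_left] at h5
            linarith
        _ = 20 * ∑' j, F j := by ring
    have hS : Summable S :=
      summable_of_sum_range_le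
        (fun N => mul_nonneg (by positivity) (sq_nonneg _)) hbound
    exact (summable_nat_add_iff 1).2 hS
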